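/- Let q be an odd prime power and c ∈ 𝔽_q^× a nonsquare. If A, A' ∈ GL_n(𝔽_q) both satisfy A² = A'² = c·I, then A and A' are conjugate in GL_n(𝔽_q): there exists g ∈ GL_n(𝔽_q) with g·A·g⁻¹ = A'. -/
import Mathlib

open Matrix Polynomial


noncomputable def endLift {F : Type*} [Field F] {V : Type*} [AddCommGroup V] [Module F V]
    (p : F[X]) (x : Module.End F V) (hx : aeval x p = 0) :
    AdjoinRoot p →ₐ[F] Module.End F V :=
  { Ideal.Quotient.lift _ (aeval x).toRingHom (fun a ha => by
      obtain ⟨b, rfl⟩ := Ideal.mem_span_singleton.mp ha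
      show aeval x (p * b) = 0
      rw [_root_.map_mul, hx, zero_mul]) with
    commutes' := fun r => by
      show Ideal.Quotient.lift _ _ _ (algebraMap F (AdjoinRoot p) r) = _
      rw [AdjoinRoot.algebraMap_eq]
      show Ideal.Quotient.lift _ _ _ (Ideal.Quotient.mk _ (C r)) = _
      rw [Ideal.Quotient.lift_mk]
      exact (aeval x).commutes r }

lemma endLift_root {F : Type*} [Field F] {V : Type*} [AddCommGroup V] [Module F V]
    (p : F[X]) (x : Module.End F V) (hx : aeval x p = 0) :
    endLift p x hx (AdjoinRoot.root p) = x := by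
  show Ideal.Quotient.lift _ _ _ (Ideal.Quotient.mk _ (X : F[X])) = x
  rw [Ideal.Quotient.lift_mk]
  exact aeval_X x


section Aux

variable {F K V : Type*} [Field F] [Field K] [Algebra F K]
  [AddCommGroup V] [Module F V]

/-- Type synonym carrying the `K`-module structure from an algebra hom into `End`. -/
@[nolint unusedArguments]
def ModOf (_φ : K →ₐ[F] Module.End F V) : Type _ := V

variable (φ φ' : K →ₐ[F] Module.End F V)

instance : AddCommGroup (ModOf φ) := inferInstanceAs (AddCommGroup V)
instance : Module F (ModOf φ) := inferInstanceAs (Module F V)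
instance : Module K (ModOf φ) := Module.compHom V φ.toRingHom

instance : IsScalarTower F K (ModOf φ) :=
  ⟨fun f k v => by
    show φ (f • k) v = f • φ k v
    rw [_root_.map_smul]; rfl⟩

lemma exists_intertwiner [FiniteDimensional F K] [FiniteDimensional F V] :
    ∃ e : V ≃ₗ[F] V, ∀ (k : K) (v : V), e (φ k v) = φ' k (e v) := by
  haveI : FiniteDimensional F (ModOf φ) := inferInstanceAs (FiniteDimensional F V)
  haveI : FiniteDimensional F (ModOf φ') := inferInstanceAs (FiniteDimensional F V)
  haveI : FiniteDimensional K (ModOf φ) := FiniteDimensional.right F K _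
  haveI : FiniteDimensional K (ModOf φ') := FiniteDimensional.right F K _
  have h1 : Module.finrank F K * Module.finrank K (ModOf φ)
      = Module.finrank F (ModOf φ) := Module.finrank_mul_finrank F K (ModOf φ)
  have h2 : Module.finrank F K * Module.finrank K (ModOf φ')
      = Module.finrank F (ModOf φ') := Module.finrank_mul_finrank F K (ModOf φ')
  have hVV : Module.finrank F (ModOf φ) = Module.finrank F (ModOf φ') := rfl
  have hpos : 0 < Module.finrank F K := Module.finrank_pos
  have heq : Module.finrank K (ModOf φ) = Module.finrank K (ModOf φ') :=
    Nat.eq_of_mul_eq_mul_left hpos (by rw [h1, h2, hVV])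
  let e0 : ModOf φ ≃ₗ[K] ModOf φ' := LinearEquiv.ofFinrankEq _ _ heq
  let e1 : ModOf φ ≃ₗ[F] ModOf φ' := e0.restrictScalars F
  refine ⟨{ toFun := fun v => e1 v, invFun := fun v => e1.symm v,
            map_add' := e1.map_add, map_smul' := e1.map_smul,
            left_inv := e1.left_inv, right_inv := e1.right_inv }, fun k v => ?_⟩
  exact e0.map_smul k v

end Aux

/-- Let `q` be an odd prime power and `c ∈ 𝔽_q^×` a nonsquare.
Any two matrices `A, A' ∈ GL_n(𝔽_q)` with `A² = A'² = c·I` are conjugate in `GL_n(𝔽_q)`. -/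
theorem stmt16 (q : ℕ) (hq : Odd q) (hq' : IsPrimePow q)
    (F : Type*) [Field F] [Fintype F] (hF : Fintype.card F = q)
    (c : F) (hc : ¬ IsSquare c)
    (n : ℕ) (A A' : GL (Fin n) F)
    (hA : (A : Matrix (Fin n) (Fin n) F) * (A : Matrix (Fin n) (Fin n) F) =
      c • (1 : Matrix (Fin n) (Fin n) F))
    (hA' : (A' : Matrix (Fin n) (Fin n) F) * (A' : Matrix (Fin n) (Fin n) F) =
      c • (1 : Matrix (Fin n) (Fin n) F)) :
    ∃ g : GL (Fin n) F, g * A * g⁻¹ = A' := by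
  -- the polynomial X² - c is irreducible
  have hirr : Irreducible (X ^ 2 - C c : F[X]) :=
    X_pow_sub_C_irreducible_of_prime Nat.prime_two
      (fun b hb => hc ⟨b, by rw [← hb]; ring⟩)
  haveI := Fact.mk hirr
  set K := AdjoinRoot (X ^ 2 - C c : F[X])
  haveI : FiniteDimensional F K :=
    (AdjoinRoot.powerBasis (hirr.ne_zero)).finite
  -- both A and A' yield algebra homs from K into End
  have key : ∀ B : GL (Fin n) F,
      (B : Matrix (Fin n) (Fin n) F) * (B : Matrix (Fin n) (Fin n) F) =
        c • (1 : Matrix (Fin n) (Fin n) F) →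
      aeval (Matrix.mulVecLin (B : Matrix (Fin n) (Fin n) F)) (X ^ 2 - C c : F[X]) = 0 := by
    intro B hB
    rw [map_sub, aeval_X_pow, aeval_C, pow_two]
    show Matrix.mulVecLin _ ∘ₗ Matrix.mulVecLin _ - _ = 0
    rw [← Matrix.mulVecLin_mul, hB]
    ext v i
    simp [Matrix.mulVecLin_apply, Matrix.smul_mulVec, Matrix.one_mulVec,
      Module.algebraMap_end_apply, Matrix.one_apply, Pi.single_apply]
  let φ : K →ₐ[F] Module.End F (Fin n → F) := endLift _ _ (key A hA)
  let φ' : K →ₐ[F] Module.End F (Fin n → F) := endLift _ _ (key A' hA')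
  obtain ⟨e, he⟩ := exists_intertwiner φ φ'
  have hroot : ∀ v, e (Matrix.mulVecLin (A : Matrix (Fin n) (Fin n) F) v)
      = Matrix.mulVecLin (A' : Matrix (Fin n) (Fin n) F) (e v) := by
    intro v
    have := he (AdjoinRoot.root _) v
    rwa [show φ (AdjoinRoot.root _) = _ from endLift_root _ _ _, show φ' (AdjoinRoot.root _) = _ from endLift_root _ _ _] at this
  -- convert to GL
  let ge := (LinearMap.GeneralLinearGroup.generalLinearEquiv F (Fin n → F)).symm e
  let g : GL (Fin n) F := Matrix.GeneralLinearGroup.toLin.symm ge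
  have hg : g * A = A' * g := by
    apply Matrix.GeneralLinearGroup.toLin.injective
    rw [_root_.map_mul, _root_.map_mul]
    show Matrix.GeneralLinearGroup.toLin (Matrix.GeneralLinearGroup.toLin.symm ge) * _
      = _ * Matrix.GeneralLinearGroup.toLin (Matrix.GeneralLinearGroup.toLin.symm ge)
    rw [MulEquiv.apply_symm_apply]
    apply (LinearMap.GeneralLinearGroup.generalLinearEquiv F (Fin n → F)).injective
    rw [_root_.map_mul, _root_.map_mul, MulEquiv.apply_symm_apply]
    refine LinearEquiv.ext fun v => ?_
    show e (((LinearMap.GeneralLinearGroup.generalLinearEquiv F (Fin n → F))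
        (Matrix.GeneralLinearGroup.toLin A)) v)
      = ((LinearMap.GeneralLinearGroup.generalLinearEquiv F (Fin n → F))
        (Matrix.GeneralLinearGroup.toLin A')) (e v)
    rw [LinearMap.GeneralLinearGroup.coeFn_generalLinearEquiv,
        LinearMap.GeneralLinearGroup.coeFn_generalLinearEquiv]
    show e ((Matrix.GeneralLinearGroup.toLin A : (Fin n → F) →ₗ[F] Fin n → F) v)
      = (Matrix.GeneralLinearGroup.toLin A' : (Fin n → F) →ₗ[F] Fin n → F) (e v)
    rw [Matrix.GeneralLinearGroup.coe_toLin, Matrix.GeneralLinearGroup.coe_toLin]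
    exact hroot v
  exact ⟨g, by rw [hg, mul_inv_cancel_right]⟩
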